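/- Let A₁, …, A_N be symmetric real n×n matrices and for q ∈ ℝᴺ set A(q) = Σ_{i=1}^{N} qᵢ Aᵢ. Fix f, v ∈ ℝⁿ and let q₀ ∈ ℝᴺ be such that A(q₀) is invertible. On the open set of q where A(q) is invertible define U(q) = A(q)⁻¹ f and J(q) = (1/2) (U(q) − v)ᵀ A(q) (U(q) − v). Then J is Fréchet differentiable at q₀ and its derivative is the linear functional ξ ↦ −(1/2) U(q₀)ᵀ A(ξ) U(q₀) + (1/2) vᵀ A(ξ) v, for ξ ∈ ℝᴺ. -/

import Mathlib

open Matrix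

attribute [local instance] Matrix.linftyOpNormedAddCommGroup Matrix.linftyOpNormedRing Matrix.linftyOpNormedSpace Matrix.linftyOpNormedAlgebra

/-- The stiffness matrix `A(q) = ∑ i, qᵢ • Aᵢ` depending linearly on `q`. -/
def stiff {n N : ℕ} (A : Fin N → Matrix (Fin n) (Fin n) ℝ) (q : Fin N → ℝ) :
    Matrix (Fin n) (Fin n) ℝ :=
  ∑ i, q i • A i

/-- The discrete solution `U(q) = A(q)⁻¹ f`. -/
noncomputable def discSol {n N : ℕ} (A : Fin N → Matrix (Fin n) (Fin n) ℝ)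
    (f : Fin n → ℝ) (q : Fin N → ℝ) : Fin n → ℝ :=
  (stiff A q)⁻¹.mulVec f

/-- The discrete data-fidelity functional
`J(q) = (1/2) (U(q) - v)ᵀ A(q) (U(q) - v)` with `U(q) = A(q)⁻¹ f`. -/
noncomputable def fidelity {n N : ℕ} (A : Fin N → Matrix (Fin n) (Fin n) ℝ)
    (f v : Fin n → ℝ) (q : Fin N → ℝ) : ℝ :=
  (1/2 : ℝ) * ((discSol A f q - v) ⬝ᵥ (stiff A q).mulVec (discSol A f q - v))

noncomputable def stiffCLM {n N : ℕ} (A : Fin N → Matrix (Fin n) (Fin n) ℝ) :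
    (Fin N → ℝ) →L[ℝ] Matrix (Fin n) (Fin n) ℝ :=
  LinearMap.toContinuousLinearMap
  { toFun := stiff A
    map_add' := by intro x y; simp [stiff, add_smul, Finset.sum_add_distrib]
    map_smul' := by intro c x; simp [stiff, smul_smul, Finset.smul_sum] }

noncomputable def dotCLM {n : ℕ} (x y : Fin n → ℝ) :
    Matrix (Fin n) (Fin n) ℝ →L[ℝ] ℝ :=
  LinearMap.toContinuousLinearMap
  { toFun := fun M => x ⬝ᵥ M.mulVec y
    map_add' := by intro M M'; simp [Matrix.add_mulVec, dotProduct_add]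
    map_smul' := by intro c M; simp [Matrix.smul_mulVec] }

lemma stiff_isSymm {n N : ℕ} (A : Fin N → Matrix (Fin n) (Fin n) ℝ)
    (hsymm : ∀ i, (A i).IsSymm) (q : Fin N → ℝ) : (stiff A q).IsSymm := by
  unfold Matrix.IsSymm stiff
  rw [transpose_sum]
  exact Finset.sum_congr rfl fun i _ => by rw [transpose_smul, hsymm i]

lemma fid_eq {n N : ℕ} (A : Fin N → Matrix (Fin n) (Fin n) ℝ)
    (hsymm : ∀ i, (A i).IsSymm) (f v : Fin n → ℝ) (q : Fin N → ℝ)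
    (hq : IsUnit (stiff A q).det) :
    fidelity A f v q = (1/2 : ℝ) * (f ⬝ᵥ (Ring.inverse (stiff A q)).mulVec f)
      - v ⬝ᵥ f + (1/2 : ℝ) * (v ⬝ᵥ (stiff A q).mulVec v) := by
  set S := stiff A q with hS
  set u := discSol A f q with hu
  have hSu : S.mulVec u = f := by
    rw [hu, discSol, Matrix.mulVec_mulVec, Matrix.mul_nonsing_inv _ hq, Matrix.one_mulVec]
  have hsym : Sᵀ = S := stiff_isSymm A hsymm q
  have hinv : Ring.inverse S = S⁻¹ := (Matrix.nonsing_inv_eq_ringInverse S).symm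
  have huSv : u ⬝ᵥ S.mulVec v = f ⬝ᵥ v := by
    rw [dotProduct_mulVec, ← Matrix.mulVec_transpose, hsym, hSu]
  have hvSu : v ⬝ᵥ S.mulVec u = v ⬝ᵥ f := by rw [hSu]
  have huSu : u ⬝ᵥ S.mulVec u = f ⬝ᵥ S⁻¹.mulVec f := by
    rw [hSu, hu, discSol, dotProduct_comm]
  rw [fidelity, hinv, ← hS, ← hu]
  rw [Matrix.mulVec_sub, dotProduct_sub, sub_dotProduct, sub_dotProduct,
    huSu, huSv, hvSu, dotProduct_comm v f]
  ring

/-- First-derivative formula: `J` is Fréchet differentiable at any `q₀` with `A(q₀)`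
invertible, with derivative `ξ ↦ -(1/2) U(q₀)ᵀ A(ξ) U(q₀) + (1/2) vᵀ A(ξ) v`. -/
theorem stmt_13 (n N : ℕ) (A : Fin N → Matrix (Fin n) (Fin n) ℝ)
    (hsymm : ∀ i, (A i).IsSymm)
    (f v : Fin n → ℝ) (q₀ : Fin N → ℝ) (hq₀ : IsUnit (stiff A q₀).det) :
    ∃ L : (Fin N → ℝ) →L[ℝ] ℝ,
      HasFDerivAt (fidelity A f v) L q₀ ∧
      ∀ ξ : Fin N → ℝ,
        L ξ = -((1/2 : ℝ) * (discSol A f q₀ ⬝ᵥ (stiff A ξ).mulVec (discSol A f q₀)))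
              + (1/2 : ℝ) * (v ⬝ᵥ (stiff A ξ).mulVec v) := by
  obtain ⟨U, hU⟩ := (Matrix.isUnit_iff_isUnit_det _).mpr hq₀
  -- derivative of q ↦ stiff A q
  have hstiff : ∀ q, stiffCLM A q = stiff A q := fun q => rfl
  have h1 : HasFDerivAt (fun q => stiff A q) (stiffCLM A) q₀ := (stiffCLM A).hasFDerivAt
  -- derivative of the inverse part
  have h2 : HasFDerivAt (fun q => Ring.inverse (stiff A q))
      ((-ContinuousLinearMap.mulLeftRight ℝ _ (↑U⁻¹) (↑U⁻¹)).comp (stiffCLM A)) q₀ := by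
    have := (hasFDerivAt_ringInverse (𝕜 := ℝ) U)
    rw [hU] at this
    exact this.comp q₀ h1
  -- derivative of g
  set D := ((-ContinuousLinearMap.mulLeftRight ℝ _ (↑U⁻¹ : Matrix (Fin n) (Fin n) ℝ) (↑U⁻¹)).comp (stiffCLM A))
  have h3 : HasFDerivAt (fun q => (1/2 : ℝ) * (f ⬝ᵥ (Ring.inverse (stiff A q)).mulVec f))
      ((1/2 : ℝ) • ((dotCLM f f).comp D)) q₀ := by
    have := ((dotCLM f f).hasFDerivAt.comp q₀ h2)
    exact this.const_mul (1/2 : ℝ)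
  have h4 : HasFDerivAt (fun q => (1/2 : ℝ) * (v ⬝ᵥ (stiff A q).mulVec v))
      ((1/2 : ℝ) • ((dotCLM v v).comp (stiffCLM A))) q₀ := by
    exact ((dotCLM v v).hasFDerivAt.comp q₀ h1).const_mul (1/2 : ℝ)
  have hg : HasFDerivAt (fun q => (1/2 : ℝ) * (f ⬝ᵥ (Ring.inverse (stiff A q)).mulVec f)
        - v ⬝ᵥ f + (1/2 : ℝ) * (v ⬝ᵥ (stiff A q).mulVec v))
      ((1/2 : ℝ) • ((dotCLM f f).comp D) + (1/2 : ℝ) • ((dotCLM v v).comp (stiffCLM A))) q₀ :=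
    (h3.sub_const _).add h4
  refine ⟨_, hg.congr_of_eventuallyEq ?_, ?_⟩
  · -- fidelity agrees with g near q₀
    have hopen : IsOpen {q : Fin N → ℝ | IsUnit (stiff A q).det} := by
      have hc : Continuous fun q : Fin N → ℝ => (stiff A q).det :=
        ((stiffCLM A).continuous).matrix_det
      have : {q : Fin N → ℝ | IsUnit (stiff A q).det} = (fun q => (stiff A q).det) ⁻¹' {x | x ≠ 0} := by
        ext q; simp [isUnit_iff_ne_zero]
      rw [this]
      exact (isOpen_ne_fun (by fun_prop) (by fun_prop)).preimage hc |>.mono le_rfl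
    filter_upwards [hopen.mem_nhds hq₀] with q hq
    exact fid_eq A hsymm f v q hq
  · intro ξ
    have hinv : (↑U⁻¹ : Matrix (Fin n) (Fin n) ℝ) = (stiff A q₀)⁻¹ := by
      rw [Matrix.nonsing_inv_eq_ringInverse, ← hU, Ring.inverse_unit]
    have hsym : (stiff A q₀)ᵀ = stiff A q₀ := stiff_isSymm A hsymm q₀
    have hsyminv : ((stiff A q₀)⁻¹)ᵀ = (stiff A q₀)⁻¹ := by
      rw [Matrix.transpose_nonsing_inv, hsym]
    have key : f ⬝ᵥ ((stiff A q₀)⁻¹ * stiff A ξ * (stiff A q₀)⁻¹).mulVec f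
        = discSol A f q₀ ⬝ᵥ (stiff A ξ).mulVec (discSol A f q₀) := by
      rw [← Matrix.mulVec_mulVec, ← Matrix.mulVec_mulVec, dotProduct_mulVec,
        ← Matrix.mulVec_transpose, hsyminv]
      rfl
    simp only [ContinuousLinearMap.add_apply, ContinuousLinearMap.smul_apply,
      ContinuousLinearMap.comp_apply, ContinuousLinearMap.neg_apply,
      ContinuousLinearMap.mulLeftRight_apply, D]
    have happ : ∀ (x y : Fin n → ℝ) (M : Matrix (Fin n) (Fin n) ℝ),
        dotCLM x y M = x ⬝ᵥ M.mulVec y := fun _ _ _ => rfl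
    have hstiffapp : (stiffCLM A) ξ = stiff A ξ := rfl
    change (1/2 : ℝ) * (f ⬝ᵥ (-((↑U⁻¹ : Matrix (Fin n) (Fin n) ℝ) * stiff A ξ * (↑U⁻¹ : Matrix (Fin n) (Fin n) ℝ))).mulVec f)
        + (1/2 : ℝ) * (v ⬝ᵥ (stiff A ξ).mulVec v) = _
    rw [hinv, Matrix.neg_mulVec,
      dotProduct_neg, key]
    ring
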